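/- arXiv:2605.13917 — 2 statements merged into one kernel-verified Lean document; each statement's English description precedes it below -/
import Mathlib

section
/- Let G = (V, E⁺, E⁰) be a fuzzy graph with weight function ω and let k ≥ 1 and d ≥ 1 be integers. Assume: (i) for every pair of distinct vertices u, v with {u,v} ∉ E⁺ one has |N⁺(u) ∩ N⁺(v)| ≤ k; (ii) every critical clique of G⁽⁺⁾ has at most k + 2 vertices; (iii) there is an ordering (v₁, …, v_n) of V such that each vᵢ has at most d fuzzy neighbors among v_{i+1}, …, v_n. Then every cluster of every clustering of G of cost at most k contains at most 15k²d vertices. -/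
open Finset

/-- A fuzzy graph: a finite vertex set with disjoint symmetric irreflexive sets of
'real' edges and 'fuzzy' edges; remaining pairs of distinct vertices are 'nonedges'. -/
structure FuzzyGraph (V : Type*) where
  real : V → V → Bool
  fuzzy : V → V → Bool
  real_symm : ∀ u v, real u v = real v u
  fuzzy_symm : ∀ u v, fuzzy u v = fuzzy v u
  real_irrefl : ∀ v, real v v = false
  fuzzy_irrefl : ∀ v, fuzzy v v = false
  not_real_and_fuzzy : ∀ u v, ¬(real u v = true ∧ fuzzy u v = true)

namespace FuzzyGraph

variable {V : Type*}

/-- The pair `{u,v}` is a nonedge: distinct, neither a real nor a fuzzy edge. -/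
def nonedge (G : FuzzyGraph V) (u v : V) : Prop :=
  u ≠ v ∧ ¬G.real u v ∧ ¬G.fuzzy u v

instance (G : FuzzyGraph V) [DecidableEq V] (u v : V) : Decidable (G.nonedge u v) :=
  inferInstanceAs (Decidable (u ≠ v ∧ ¬G.real u v ∧ ¬G.fuzzy u v))

/-- The simple graph `G⁽⁺⁾` of real edges. -/
def plus (G : FuzzyGraph V) : SimpleGraph V where
  Adj u v := G.real u v
  symm := ⟨fun u v (h : G.real u v = true) => by rwa [G.real_symm] at h⟩
  loopless := ⟨fun v (h : G.real v v = true) => by rw [G.real_irrefl] at h; exact Bool.noConfusion h⟩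

/-- The simple graph `G⁽⁰⁾` of fuzzy edges. -/
def zero (G : FuzzyGraph V) : SimpleGraph V where
  Adj u v := G.fuzzy u v
  symm := ⟨fun u v (h : G.fuzzy u v = true) => by rwa [G.fuzzy_symm] at h⟩
  loopless := ⟨fun v (h : G.fuzzy v v = true) => by rw [G.fuzzy_irrefl] at h; exact Bool.noConfusion h⟩

variable [Fintype V] [DecidableEq V]

/-- The real neighborhood `N⁺(v)`. -/
def realNbrs (G : FuzzyGraph V) (v : V) : Finset V := univ.filter fun u => G.real v u

/-- The fuzzy neighborhood `N⁰(v)`. -/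
def fuzzyNbrs (G : FuzzyGraph V) (v : V) : Finset V := univ.filter fun u => G.fuzzy v u

/-- The nonneighborhood `N⁻(v)`. -/
def nonNbrs (G : FuzzyGraph V) (v : V) : Finset V := univ.filter fun u => G.nonedge v u

/-- The closed real neighborhood `N⁺[v]`. -/
def closedRealNbrs (G : FuzzyGraph V) (v : V) : Finset V := insert v (G.realNbrs v)

end FuzzyGraph

/-- `ω` is a valid weight function for `G`: symmetric nonnegative integer weights,
zero exactly on the fuzzy edges. -/
def IsWeight {V : Type*} [Fintype V] [DecidableEq V] (G : FuzzyGraph V) (ω : V → V → ℕ) : Prop :=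
  (∀ u v, ω u v = ω v u) ∧ ∀ u v : V, u ≠ v → (ω u v = 0 ↔ G.fuzzy u v)

/-- The unit weight function: weight 1 on real edges and nonedges, 0 on fuzzy edges. -/
def unitW {V : Type*} (G : FuzzyGraph V) : V → V → ℕ := fun u v => if G.fuzzy u v then 0 else 1

/-- Two vertices lie in a common cluster of the clustering `𝒞`. -/
def together {V : Type*} [Fintype V] [DecidableEq V] (𝒞 : Finpartition (univ : Finset V))
    (u v : V) : Prop :=
  ∃ C ∈ 𝒞.parts, u ∈ C ∧ v ∈ C

instance {V : Type*} [Fintype V] [DecidableEq V] (𝒞 : Finpartition (univ : Finset V)) (u v : V) :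
    Decidable (together 𝒞 u v) :=
  inferInstanceAs (Decidable (∃ C ∈ 𝒞.parts, u ∈ C ∧ v ∈ C))

/-- The cost of a clustering: total weight of real edges between different clusters
plus total weight of nonedges inside clusters.  (Each unordered pair is counted twice
in the sum over ordered pairs, whence the division by 2.) -/
def cost {V : Type*} [Fintype V] [DecidableEq V] (G : FuzzyGraph V) (ω : V → V → ℕ)
    (𝒞 : Finpartition (univ : Finset V)) : ℕ :=
  (∑ p ∈ univ.offDiag,
      ((if G.real p.1 p.2 ∧ ¬together 𝒞 p.1 p.2 then ω p.1 p.2 else 0) +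
       (if G.nonedge p.1 p.2 ∧ together 𝒞 p.1 p.2 then ω p.1 p.2 else 0))) / 2

/-- A clique in `G⁽⁺⁾`: pairwise real-adjacent vertices. -/
def IsRealClique {V : Type*} (G : FuzzyGraph V) (K : Finset V) : Prop :=
  ∀ u ∈ K, ∀ v ∈ K, u ≠ v → G.real u v

/-- A clique in `G⁽⁰⁾`: pairwise fuzzy-adjacent vertices. -/
def IsFuzzyClique {V : Type*} (G : FuzzyGraph V) (K : Finset V) : Prop :=
  ∀ u ∈ K, ∀ v ∈ K, u ≠ v → G.fuzzy u v

/-- A critical clique of `G⁽⁺⁾`: a clique with `⋂_{x ∈ K} N⁺[x] = ⋃_{x ∈ K} N⁺[x]`,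
inclusion-wise maximal with this property. -/
def IsCriticalClique {V : Type*} [Fintype V] [DecidableEq V] (G : FuzzyGraph V)
    (K : Finset V) : Prop :=
  IsRealClique G K ∧ K.inf (G.closedRealNbrs) = K.sup (G.closedRealNbrs) ∧
    ∀ K' : Finset V, K ⊆ K' → IsRealClique G K' →
      K'.inf (G.closedRealNbrs) = K'.sup (G.closedRealNbrs) → K' = K

/-- A simple graph is `c`-closed if every pair of distinct nonadjacent vertices has
fewer than `c` common neighbors. -/
def IsCClosed {V : Type*} (H : SimpleGraph V) (c : ℕ) : Prop :=
  ∀ u v : V, u ≠ v → ¬H.Adj u v → Set.ncard {w | H.Adj u w ∧ H.Adj v w} < c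

/-- A fuzzy graph is fuzzy `c`-closed if its fuzzy edge graph `G⁽⁰⁾` is `c`-closed. -/
def FuzzyCClosed {V : Type*} [Fintype V] [DecidableEq V] (G : FuzzyGraph V) (c : ℕ) : Prop :=
  ∀ u v : V, u ≠ v → ¬G.fuzzy u v → ((G.fuzzyNbrs u) ∩ (G.fuzzyNbrs v)).card < c


private lemma stmt6_aux1 (k d : ℕ) (hk : 1 ≤ k) (hd : 1 ≤ d) :
    d * k ≤ k ^ 2 * (d * d) ∧ d ≤ k ^ 2 * (d * d) ∧ k ≤ k ^ 2 * d ∧ d ≤ k ^ 2 * d ∧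
      k ≤ k ^ 2 ∧ 1 ≤ k ^ 2 * d := by
  have h1 : k ≤ k ^ 2 := by nlinarith
  have h2 : d ≤ d * d := by nlinarith
  refine ⟨?_, ?_, ?_, ?_, h1, ?_⟩ <;> nlinarith

private lemma stmt6_arith1 (k d n t a : ℕ) (hk : 1 ≤ k) (hd : 1 ≤ d)
    (hbig : 15 * k ^ 2 * d + 1 ≤ n) (ht2 : n ≤ k + 2 + 2 * t) (ha : 6 * d < a)
    (hsum : a * t ≤ 2 * k + 1 + 2 * (d * n)) : False := by
  obtain ⟨x1, x2, x3, x4, x5, x6⟩ := stmt6_aux1 k d hk hd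
  have E2 : d * n ≤ d * (k + 2 + 2 * t) := Nat.mul_le_mul_left d ht2
  have E3 : d * (15 * k ^ 2 * d + 1) ≤ d * n := Nat.mul_le_mul_left d hbig
  have E4 : (6 * d + 1) * t ≤ a * t := Nat.mul_le_mul_right t (by omega)
  nlinarith [E2, E3, E4, hsum, ht2, hbig, x1, x2, x3, x4, x5, x6, hk, hd]

private lemma stmt6_arith2 (k d n a : ℕ) (hk : 1 ≤ k) (hk15 : 15 * k ≤ n)
    (hd15 : 15 * d ≤ n) (ha : 4 * d < a)
    (E1 : a * n ≤ 2 * k + 1 + 2 * (d * n) + a * (k + 6 * d)) : False := by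
  have hn2 : 15 * (k + 6 * d) ≤ 7 * n := by omega
  have E2 : a * (15 * (k + 6 * d)) ≤ a * (7 * n) := Nat.mul_le_mul_left _ hn2
  have E3 : (4 * d + 1) * n ≤ a * n := Nat.mul_le_mul_right n (by omega)
  nlinarith [E1, E2, E3, hk, hk15]

private lemma stmt6_arith3 (k d n : ℕ) (hk : 1 ≤ k) (hd : 1 ≤ d)
    (hbig : 15 * k ^ 2 * d + 1 ≤ n)
    (hle : n ≤ 6 * d + k + 4 * d * k + (k + 2)) : False := by
  obtain ⟨x1, x2, x3, x4, x5, x6⟩ := stmt6_aux1 k d hk hd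
  nlinarith [hbig, hle, x1, x2, x3, x4, x5, x6]

/-- Under the stated reducedness conditions and existence of a fuzzy degeneracy
ordering with back-degree at most `d`, every cluster of every clustering of cost at most `k`
has at most `15k²d` vertices. -/
theorem stmt6 {V : Type*} [Fintype V] [DecidableEq V]
    (G : FuzzyGraph V) (ω : V → V → ℕ) (hω : IsWeight G ω) (k d : ℕ) (hk : 1 ≤ k) (hd : 1 ≤ d)
    (h1 : ∀ u v : V, u ≠ v → ¬G.real u v → ((G.realNbrs u) ∩ (G.realNbrs v)).card ≤ k)
    (h2 : ∀ K : Finset V, IsCriticalClique G K → K.card ≤ k + 2)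
    (h3 : ∃ σ : Fin (Fintype.card V) ≃ V, ∀ i : Fin (Fintype.card V),
      (Finset.univ.filter fun j : Fin (Fintype.card V) => i < j ∧ G.fuzzy (σ i) (σ j)).card ≤ d)
    (𝒞 : Finpartition (Finset.univ : Finset V)) (hcost : cost G ω 𝒞 ≤ k)
    (C : Finset V) (hC : C ∈ 𝒞.parts) :
    C.card ≤ 15 * k ^ 2 * d := by
  classical
  by_contra hbig
  push_neg at hbig
  set n := C.card with hndef
  have hbig' : 15 * k ^ 2 * d + 1 ≤ n := hbig
  have hk1 : 1 ≤ k ^ 2 := Nat.one_le_pow _ _ (by omega)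
  have hk2 : 15 * k ≤ n := by nlinarith
  have hd2 : 15 * d ≤ n := by nlinarith
  have hn15 : 15 < n := by nlinarith
  -- weight positivity
  have hwpos : ∀ u v : V, u ≠ v → ¬G.fuzzy u v → 1 ≤ ω u v := by
    intro u v huv hf
    rcases Nat.eq_zero_or_pos (ω u v) with h0 | h
    · exact absurd ((hω.2 u v huv).mp h0) hf
    · exact h
  -- cost bound
  have hcost2 : (∑ p ∈ univ.offDiag,
      ((if G.real p.1 p.2 ∧ ¬together 𝒞 p.1 p.2 then ω p.1 p.2 else 0) +
       (if G.nonedge p.1 p.2 ∧ together 𝒞 p.1 p.2 then ω p.1 p.2 else 0))) ≤ 2 * k + 1 := by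
    have h := hcost
    unfold cost at h
    omega
  -- non-real partners inside C
  set NR : V → Finset V := fun v => C.filter (fun w => w ≠ v ∧ ¬G.real v w) with hNRdef
  -- pair inequality from h1
  have hpair : ∀ u ∈ C, ∀ v ∈ C, u ≠ v → ¬G.real u v →
      n ≤ k + 2 + (NR u).card + (NR v).card := by
    intro u hu v hv huv hnr
    have hcov : C ⊆ insert u (insert v (NR u ∪ NR v ∪ (G.realNbrs u ∩ G.realNbrs v))) := by
      intro w hw
      by_cases hwu : w = u
      · simp [hwu]
      by_cases hwv : w = v
      · simp [hwv]
      simp only [mem_insert, mem_union, mem_inter]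
      by_cases hru : G.real u w
      · by_cases hrv : G.real v w
        · refine Or.inr (Or.inr (Or.inr ⟨?_, ?_⟩)) <;>
            simp [FuzzyGraph.realNbrs, hru, hrv]
        · refine Or.inr (Or.inr (Or.inl (Or.inr ?_)))
          simp only [hNRdef]
          exact mem_filter.2 ⟨hw, hwv, hrv⟩
      · refine Or.inr (Or.inr (Or.inl (Or.inl ?_)))
        simp only [hNRdef]
        exact mem_filter.2 ⟨hw, hwu, hru⟩
    have e0 := card_le_card hcov
    have e1 := card_insert_le u (insert v (NR u ∪ NR v ∪ (G.realNbrs u ∩ G.realNbrs v)))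
    have e2 := card_insert_le v (NR u ∪ NR v ∪ (G.realNbrs u ∩ G.realNbrs v))
    have e3 := card_union_le (NR u ∪ NR v) (G.realNbrs u ∩ G.realNbrs v)
    have e4 := card_union_le (NR u) (NR v)
    have e5 := h1 u v huv hnr
    omega
  -- threshold
  obtain ⟨t, ht1, ht2⟩ : ∃ t : ℕ, k + 2 * t < n ∧ n ≤ k + 2 + 2 * t :=
    ⟨(n - k - 1) / 2, by omega, by omega⟩
  set H := C.filter (fun v => t ≤ (NR v).card) with hHdef
  have hHsub : H ⊆ C := filter_subset _ _
  have htouch : ∀ u ∈ C, ∀ v ∈ C, u ≠ v → ¬G.real u v → u ∈ H ∨ v ∈ H := by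
    intro u hu v hv huv hnr
    by_contra hcon
    push_neg at hcon
    have hu' : (NR u).card < t := by
      by_contra hh; push_neg at hh
      exact hcon.1 (by rw [hHdef]; exact mem_filter.2 ⟨hu, hh⟩)
    have hv' : (NR v).card < t := by
      by_contra hh; push_neg at hh
      exact hcon.2 (by rw [hHdef]; exact mem_filter.2 ⟨hv, hh⟩)
    have := hpair u hu v hv huv hnr
    omega
  -- total ordered non-real pairs inside C
  set Pairs := (C ×ˢ C).filter (fun p => p.1 ≠ p.2 ∧ ¬G.real p.1 p.2) with hPdef
  have hfiber : ∀ b ∈ C, (NR b).card ≤ (Pairs.filter (fun p => p.1 = b)).card := by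
    intro b hb
    apply card_le_card_of_injOn (fun w => (b, w))
    · intro w hw
      simp only [hNRdef] at hw
      obtain ⟨hwC, hwb, hnr⟩ := mem_filter.1 hw
      refine mem_filter.2 ⟨?_, rfl⟩
      rw [hPdef]
      exact mem_filter.2 ⟨mem_product.2 ⟨hb, hwC⟩, Ne.symm hwb, hnr⟩
    · intro a _ b' _ hab
      simpa using congrArg Prod.snd hab
  have hsumfib : ∀ A : Finset V, A ⊆ C → ∑ h ∈ A, (NR h).card ≤ Pairs.card := by
    intro A hA
    have hmem : ∀ p ∈ Pairs, p.1 ∈ C := by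
      intro p hp
      rw [hPdef] at hp
      exact (mem_product.1 (mem_filter.1 hp).1).1
    have heq : Pairs.card = ∑ b ∈ C, (Pairs.filter (fun p => p.1 = b)).card :=
      card_eq_sum_card_fiberwise hmem
    calc ∑ h ∈ A, (NR h).card
        ≤ ∑ h ∈ A, (Pairs.filter (fun p => p.1 = h)).card :=
          sum_le_sum (fun b hb => hfiber b (hA hb))
      _ ≤ ∑ b ∈ C, (Pairs.filter (fun p => p.1 = b)).card := sum_le_sum_of_subset hA
      _ = Pairs.card := heq.symm
  -- nonedge pairs inside C, and cut edges
  set NEs := (C ×ˢ C).filter (fun p => G.nonedge p.1 p.2) with hNEdef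
  set Cut := C.filter (fun v => ∃ w, w ∉ C ∧ G.real v w) with hCutdef
  set CutP := (C ×ˢ Cᶜ).filter (fun p => G.real p.1 p.2) with hCutPdef
  set CutP' := (Cᶜ ×ˢ C).filter (fun p => G.real p.1 p.2) with hCutP'def
  have hone : ∀ p ∈ NEs ∪ CutP ∪ CutP',
      1 ≤ (if G.real p.1 p.2 ∧ ¬together 𝒞 p.1 p.2 then ω p.1 p.2 else 0) +
       (if G.nonedge p.1 p.2 ∧ together 𝒞 p.1 p.2 then ω p.1 p.2 else 0) := by
    intro p hp
    rcases mem_union.1 hp with hp | hp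
    · rcases mem_union.1 hp with hp | hp
      · rw [hNEdef] at hp
        obtain ⟨hmem, hne⟩ := mem_filter.1 hp
        obtain ⟨hp1, hp2⟩ := mem_product.1 hmem
        have htg : together 𝒞 p.1 p.2 := ⟨C, hC, hp1, hp2⟩
        have hw1 : 1 ≤ ω p.1 p.2 := hwpos _ _ hne.1 hne.2.2
        have hcond : G.nonedge p.1 p.2 ∧ together 𝒞 p.1 p.2 := ⟨hne, htg⟩
        rw [if_pos hcond]
        exact le_trans hw1 (Nat.le_add_left _ _)
      · rw [hCutPdef] at hp
        obtain ⟨hmem, hre⟩ := mem_filter.1 hp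
        obtain ⟨hp1, hp2⟩ := mem_product.1 hmem
        have hp2' : p.2 ∉ C := mem_compl.1 hp2
        have hnt : ¬ together 𝒞 p.1 p.2 := by
          rintro ⟨D, hD, hd1, hd2⟩
          exact hp2' ((𝒞.eq_of_mem_parts hD hC hd1 hp1) ▸ hd2)
        have hne : p.1 ≠ p.2 := by
          intro e; rw [e, G.real_irrefl] at hre; exact Bool.noConfusion hre
        have hnf : ¬ G.fuzzy p.1 p.2 := fun hf => G.not_real_and_fuzzy _ _ ⟨hre, hf⟩
        have hw1 : 1 ≤ ω p.1 p.2 := hwpos _ _ hne hnf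
        rw [if_pos ⟨hre, hnt⟩]
        exact le_trans hw1 (Nat.le_add_right _ _)
    · rw [hCutP'def] at hp
      obtain ⟨hmem, hre⟩ := mem_filter.1 hp
      obtain ⟨hp1, hp2⟩ := mem_product.1 hmem
      have hp1' : p.1 ∉ C := mem_compl.1 hp1
      have hnt : ¬ together 𝒞 p.1 p.2 := by
        rintro ⟨D, hD, hd1, hd2⟩
        exact hp1' ((𝒞.eq_of_mem_parts hD hC hd2 hp2) ▸ hd1)
      have hne : p.1 ≠ p.2 := by
        intro e; rw [e, G.real_irrefl] at hre; exact Bool.noConfusion hre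
      have hnf : ¬ G.fuzzy p.1 p.2 := fun hf => G.not_real_and_fuzzy _ _ ⟨hre, hf⟩
      have hw1 : 1 ≤ ω p.1 p.2 := hwpos _ _ hne hnf
      rw [if_pos ⟨hre, hnt⟩]
      exact le_trans hw1 (Nat.le_add_right _ _)
  have hsubOff : NEs ∪ CutP ∪ CutP' ⊆ univ.offDiag := by
    intro p hp
    rw [mem_offDiag]
    refine ⟨mem_univ _, mem_univ _, ?_⟩
    rcases mem_union.1 hp with hp | hp
    · rcases mem_union.1 hp with hp | hp
      · rw [hNEdef] at hp; exact ((mem_filter.1 hp).2).1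
      · rw [hCutPdef] at hp
        have hre := (mem_filter.1 hp).2
        intro e; rw [e, G.real_irrefl] at hre; exact Bool.noConfusion hre
    · rw [hCutP'def] at hp
      have hre := (mem_filter.1 hp).2
      intro e; rw [e, G.real_irrefl] at hre; exact Bool.noConfusion hre
  have hAcard : (NEs ∪ CutP ∪ CutP').card ≤ 2 * k + 1 := by
    calc (NEs ∪ CutP ∪ CutP').card
        = ∑ _p ∈ NEs ∪ CutP ∪ CutP', 1 := by rw [card_eq_sum_ones]
      _ ≤ ∑ p ∈ NEs ∪ CutP ∪ CutP',
          ((if G.real p.1 p.2 ∧ ¬together 𝒞 p.1 p.2 then ω p.1 p.2 else 0) +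
           (if G.nonedge p.1 p.2 ∧ together 𝒞 p.1 p.2 then ω p.1 p.2 else 0)) :=
          sum_le_sum hone
      _ ≤ ∑ p ∈ univ.offDiag,
          ((if G.real p.1 p.2 ∧ ¬together 𝒞 p.1 p.2 then ω p.1 p.2 else 0) +
           (if G.nonedge p.1 p.2 ∧ together 𝒞 p.1 p.2 then ω p.1 p.2 else 0)) :=
          sum_le_sum_of_subset hsubOff
      _ ≤ 2 * k + 1 := hcost2
  -- disjointness
  have hd1 : Disjoint NEs CutP := by
    rw [disjoint_left]
    intro p hp hp'
    rw [hNEdef] at hp; rw [hCutPdef] at hp'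
    exact (mem_compl.1 (mem_product.1 (mem_filter.1 hp').1).2)
      (mem_product.1 (mem_filter.1 hp).1).2
  have hd2' : Disjoint (NEs ∪ CutP) CutP' := by
    rw [disjoint_left]
    intro p hp hp'
    rw [hCutP'def] at hp'
    have h1p : p.1 ∉ C := mem_compl.1 (mem_product.1 (mem_filter.1 hp').1).1
    rcases mem_union.1 hp with hp | hp
    · rw [hNEdef] at hp; exact h1p (mem_product.1 (mem_filter.1 hp).1).1
    · rw [hCutPdef] at hp; exact h1p (mem_product.1 (mem_filter.1 hp).1).1
  have hAeq : (NEs ∪ CutP ∪ CutP').card = NEs.card + CutP.card + CutP'.card := by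
    rw [card_union_of_disjoint hd2', card_union_of_disjoint hd1]
  have hCutle1 : Cut.card ≤ CutP.card := by
    have hsub : Cut ⊆ CutP.image Prod.fst := ?_
    · exact le_trans (card_le_card hsub) card_image_le
    intro v hv
    rw [hCutdef] at hv
    obtain ⟨hvC, w, hwC, hwr⟩ := mem_filter.1 hv
    exact mem_image.2 ⟨(v, w), by
      rw [hCutPdef]
      exact mem_filter.2 ⟨mem_product.2 ⟨hvC, mem_compl.2 hwC⟩, hwr⟩, rfl⟩
  have hCutle2 : Cut.card ≤ CutP'.card := by
    have hsub : Cut ⊆ CutP'.image Prod.snd := ?_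
    · exact le_trans (card_le_card hsub) card_image_le
    intro v hv
    rw [hCutdef] at hv
    obtain ⟨hvC, w, hwC, hwr⟩ := mem_filter.1 hv
    refine mem_image.2 ⟨(w, v), ?_, rfl⟩
    rw [hCutP'def]
    refine mem_filter.2 ⟨mem_product.2 ⟨mem_compl.2 hwC, hvC⟩, ?_⟩
    rw [← G.real_symm]; exact hwr
  have hNEcard : NEs.card ≤ 2 * k + 1 := by omega
  have hCut : Cut.card ≤ k := by omega
  -- fuzzy ordered pairs inside C
  obtain ⟨σ, hσ⟩ := h3
  set Ford := (C ×ˢ C).filter (fun p => G.fuzzy p.1 p.2) with hForddef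
  have hF1 : (Ford.filter (fun p => σ.symm p.1 < σ.symm p.2)).card ≤ n * d := by
    have hmem : ∀ p ∈ Ford.filter (fun p => σ.symm p.1 < σ.symm p.2), p.1 ∈ C := by
      intro p hp
      have := (mem_filter.1 hp).1
      rw [hForddef] at this
      exact (mem_product.1 (mem_filter.1 this).1).1
    rw [card_eq_sum_card_fiberwise hmem]
    refine le_trans (sum_le_card_nsmul _ _ d ?_) (by rw [smul_eq_mul])
    intro u _
    refine le_trans (card_le_card_of_injOn (fun p => σ.symm p.2) ?_ ?_) (hσ (σ.symm u))
    · intro p hp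
      obtain ⟨hp1, hp2⟩ := mem_filter.1 hp
      obtain ⟨hpF, hlt⟩ := mem_filter.1 hp1
      rw [hForddef] at hpF
      have hfz := (mem_filter.1 hpF).2
      simp only [mem_coe, mem_filter, mem_univ, true_and]
      constructor
      · rw [← hp2]; exact hlt
      · rw [Equiv.apply_symm_apply, Equiv.apply_symm_apply, ← hp2]; exact hfz
    · intro p hp q hq hpq
      have e1 : p.1 = u := (mem_filter.1 hp).2
      have e2 : q.1 = u := (mem_filter.1 hq).2
      have e3 : p.2 = q.2 := σ.symm.injective hpq
      exact Prod.ext (e1.trans e2.symm) e3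
  have hF2 : (Ford.filter (fun p => σ.symm p.2 < σ.symm p.1)).card ≤ n * d := by
    have hmem : ∀ p ∈ Ford.filter (fun p => σ.symm p.2 < σ.symm p.1), p.2 ∈ C := by
      intro p hp
      have := (mem_filter.1 hp).1
      rw [hForddef] at this
      exact (mem_product.1 (mem_filter.1 this).1).2
    rw [card_eq_sum_card_fiberwise hmem]
    refine le_trans (sum_le_card_nsmul _ _ d ?_) (by rw [smul_eq_mul])
    intro u _
    refine le_trans (card_le_card_of_injOn (fun p => σ.symm p.1) ?_ ?_) (hσ (σ.symm u))
    · intro p hp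
      obtain ⟨hp1, hp2⟩ := mem_filter.1 hp
      obtain ⟨hpF, hlt⟩ := mem_filter.1 hp1
      rw [hForddef] at hpF
      have hfz := (mem_filter.1 hpF).2
      simp only [mem_coe, mem_filter, mem_univ, true_and]
      constructor
      · rw [← hp2]; exact hlt
      · rw [Equiv.apply_symm_apply, Equiv.apply_symm_apply, ← hp2, ← G.fuzzy_symm]
        exact hfz
    · intro p hp q hq hpq
      have e1 : p.2 = u := (mem_filter.1 hp).2
      have e2 : q.2 = u := (mem_filter.1 hq).2
      have e3 : p.1 = q.1 := σ.symm.injective hpq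
      exact Prod.ext e3 (e1.trans e2.symm)
  have hFord : Ford.card ≤ 2 * (d * n) := by
    have hsplit : Ford ⊆ (Ford.filter (fun p => σ.symm p.1 < σ.symm p.2)) ∪
        (Ford.filter (fun p => σ.symm p.2 < σ.symm p.1)) := by
      intro p hp
      have hne : p.1 ≠ p.2 := by
        intro e
        have := (mem_filter.1 (hForddef ▸ hp)).2
        rw [e, G.fuzzy_irrefl] at this
        exact Bool.noConfusion this
      have hne' : σ.symm p.1 ≠ σ.symm p.2 := fun e => hne (σ.symm.injective e)
      rcases lt_or_gt_of_ne hne' with h | h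
      · exact mem_union_left _ (mem_filter.2 ⟨hp, h⟩)
      · exact mem_union_right _ (mem_filter.2 ⟨hp, h⟩)
    calc Ford.card ≤ _ := card_le_card hsplit
      _ ≤ _ := card_union_le _ _
      _ ≤ 2 * (d * n) := by
          have := hF1; have := hF2
          have e : n * d = d * n := Nat.mul_comm n d
          omega
  -- all non-real ordered pairs
  have hPairs : Pairs.card ≤ 2 * k + 1 + 2 * (d * n) := by
    have hPsub : Pairs ⊆ NEs ∪ Ford := by
      intro p hp
      rw [hPdef] at hp
      obtain ⟨hmem, hne, hnr⟩ := mem_filter.1 hp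
      by_cases hf : G.fuzzy p.1 p.2
      · exact mem_union_right _ (by rw [hForddef]; exact mem_filter.2 ⟨hmem, hf⟩)
      · exact mem_union_left _ (by rw [hNEdef]; exact mem_filter.2 ⟨hmem, hne, hnr, hf⟩)
    calc Pairs.card ≤ _ := card_le_card hPsub
      _ ≤ NEs.card + Ford.card := card_union_le _ _
      _ ≤ 2 * k + 1 + 2 * (d * n) := by omega
  -- |H| ≤ 6d
  have hHcard : H.card ≤ 6 * d := by
    by_contra hcon
    push_neg at hcon
    have hsum : H.card * t ≤ ∑ h ∈ H, (NR h).card := by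
      have := Finset.card_nsmul_le_sum H (fun h => (NR h).card) t
        (fun x hx => by rw [hHdef] at hx; exact (mem_filter.1 hx).2)
      simpa [smul_eq_mul] using this
    have hsum2 := hsumfib H hHsub
    exact stmt6_arith1 k d n t H.card hk hd hbig' ht2 hcon
      (le_trans hsum (le_trans hsum2 hPairs))
  -- hubs with a non-real partner outside H
  set H' := H.filter (fun h => ∃ w ∈ C, w ∉ H ∧ ¬G.real h w) with hH'def
  have hH'subH : H' ⊆ H := filter_subset _ _
  have hH'subC : H' ⊆ C := fun x hx => hHsub (hH'subH hx)
  -- each hub in H' has at most k real partners outside H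
  have hEx : ∀ h ∈ H', (C.filter (fun w => w ∉ H ∧ G.real h w)).card ≤ k := by
    intro h hh
    rw [hH'def] at hh
    obtain ⟨hhH, u, huC, huH, hur⟩ := mem_filter.1 hh
    have huh : u ≠ h := fun e => huH (e ▸ hhH)
    have hur' : ¬G.real u h := fun hr => hur (by rwa [G.real_symm] at hr)
    refine le_trans (card_le_card ?_) (h1 u h huh hur')
    intro w hw
    obtain ⟨hwC, hwH, hwr⟩ := mem_filter.1 hw
    have hwu : w ≠ u := by
      intro e; rw [e] at hwr; exact hur hwr
    have hru : G.real u w := by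
      by_contra hnr
      rcases htouch u huC w hwC (Ne.symm hwu) hnr with h' | h'
      · exact huH h'
      · exact hwH h'
    simp only [FuzzyGraph.realNbrs, mem_inter, mem_filter, mem_univ, true_and]
    exact ⟨hru, hwr⟩
  -- each hub in H' has many non-real partners
  have hrH' : ∀ h ∈ H', n ≤ (NR h).card + k + 6 * d := by
    intro h hh
    have hhH : h ∈ H := hH'subH hh
    have hcov : C ⊆ H ∪ (C.filter (fun w => w ∉ H ∧ G.real h w)) ∪ NR h := by
      intro w hwC
      by_cases hwH : w ∈ H
      · exact mem_union_left _ (mem_union_left _ hwH)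
      by_cases hwr : G.real h w
      · exact mem_union_left _ (mem_union_right _ (mem_filter.2 ⟨hwC, hwH, hwr⟩))
      · refine mem_union_right _ ?_
        simp only [hNRdef]
        exact mem_filter.2 ⟨hwC, fun e => hwH (e ▸ hhH), hwr⟩
    have e0 := card_le_card hcov
    have e1 := card_union_le (H ∪ (C.filter (fun w => w ∉ H ∧ G.real h w))) (NR h)
    have e2 := card_union_le H (C.filter (fun w => w ∉ H ∧ G.real h w))
    have e3 := hEx h hh
    omega
  -- |H'| ≤ 4d
  have hH'card : H'.card ≤ 4 * d := by
    by_contra hcon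
    push_neg at hcon
    have hsum : H'.card * n ≤ ∑ h ∈ H', ((NR h).card + k + 6 * d) := by
      have := Finset.card_nsmul_le_sum H' (fun h => (NR h).card + k + 6 * d) n hrH'
      simpa [smul_eq_mul] using this
    have hsum2 : ∑ h ∈ H', ((NR h).card + k + 6 * d) =
        (∑ h ∈ H', (NR h).card) + H'.card * (k + 6 * d) := by
      rw [sum_add_distrib, sum_add_distrib, sum_const, sum_const, smul_eq_mul, smul_eq_mul]
      ring
    have hsum3 := hsumfib H' hH'subC
    have E1 : H'.card * n ≤ 2 * k + 1 + 2 * (d * n) + H'.card * (k + 6 * d) := by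
      rw [hsum2] at hsum
      have := le_trans hsum3 hPairs
      omega
    exact stmt6_arith2 k d n H'.card hk hk2 hd2 hcon E1
  -- exceptional vertices
  set Bad := H'.biUnion (fun h => C.filter (fun w => w ∉ H ∧ G.real h w)) with hBaddef
  have hBad : Bad.card ≤ 4 * d * k := by
    calc Bad.card ≤ ∑ h ∈ H', (C.filter (fun w => w ∉ H ∧ G.real h w)).card :=
          card_biUnion_le
      _ ≤ H'.card * k := by
          have := Finset.sum_le_card_nsmul H'
            (fun h => (C.filter (fun w => w ∉ H ∧ G.real h w)).card) k hEx
          simpa [smul_eq_mul] using this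
      _ ≤ 4 * d * k := Nat.mul_le_mul_right k hH'card
  -- the critical clique
  set K := univ.filter (fun x => G.closedRealNbrs x = C \ H') with hKdef
  have hKmem : ∀ x ∈ K, G.closedRealNbrs x = C \ H' := by
    intro x hx; rw [hKdef] at hx; exact (mem_filter.1 hx).2
  have hKcard : K.card ≤ k + 2 := by
    rcases K.eq_empty_or_nonempty with hKe | hne
    · rw [hKe]; simp
    obtain ⟨x₀, hx₀⟩ := hne
    apply h2
    have hclique : IsRealClique G K := by
      intro u hu v hv huv
      have hu' := hKmem u hu
      have hv' := hKmem v hv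
      have hmem : u ∈ G.closedRealNbrs v := by
        rw [hv', ← hu']
        exact mem_insert_self u _
      rcases mem_insert.1 hmem with h | h
      · exact absurd h huv
      · have : G.real v u := by
          simpa [FuzzyGraph.realNbrs] using h
        rwa [G.real_symm] at this
    refine ⟨hclique, ?_, ?_⟩
    · have hinf : K.inf G.closedRealNbrs = C \ H' := by
        rw [Finset.inf_congr rfl hKmem]
        exact Finset.inf_const ⟨x₀, hx₀⟩ _
      have hsup : K.sup G.closedRealNbrs = C \ H' := by
        rw [Finset.sup_congr rfl hKmem]
        exact Finset.sup_const ⟨x₀, hx₀⟩ _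
      rw [hinf, hsup]
    · intro K' hKK' _ hinfsup
      refine Finset.Subset.antisymm ?_ hKK'
      intro x hx
      have key : ∀ a ∈ K', ∀ b ∈ K', G.closedRealNbrs a ≤ G.closedRealNbrs b := by
        intro a ha b hb
        calc G.closedRealNbrs a ≤ K'.sup G.closedRealNbrs := Finset.le_sup ha
          _ = K'.inf G.closedRealNbrs := hinfsup.symm
          _ ≤ G.closedRealNbrs b := Finset.inf_le hb
      have hx0K' := hKK' hx₀
      have heq : G.closedRealNbrs x = C \ H' := by
        rw [← hKmem x₀ hx₀]
        exact le_antisymm (key x hx x₀ hx0K') (key x₀ hx0K' x hx)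
      rw [hKdef]
      exact mem_filter.2 ⟨mem_univ x, heq⟩
  -- the cover
  have hcover : C ⊆ H ∪ Cut ∪ Bad ∪ K := by
    intro w hwC
    by_cases hwH : w ∈ H
    · exact mem_union_left _ (mem_union_left _ (mem_union_left _ hwH))
    by_cases hwCut : w ∈ Cut
    · exact mem_union_left _ (mem_union_left _ (mem_union_right _ hwCut))
    by_cases hwBad : w ∈ Bad
    · exact mem_union_left _ (mem_union_right _ hwBad)
    refine mem_union_right _ ?_
    have hnc : ∀ x, G.real w x → x ∈ C := by
      intro x hx
      by_contra hxC
      exact hwCut (by rw [hCutdef]; exact mem_filter.2 ⟨hwC, x, hxC, hx⟩)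
    have hnb : ∀ h ∈ H', ¬ G.real h w := by
      intro h hh hr
      refine hwBad ?_
      rw [hBaddef]
      exact mem_biUnion.2 ⟨h, hh, mem_filter.2 ⟨hwC, hwH, hr⟩⟩
    have heq : G.closedRealNbrs w = C \ H' := by
      ext x
      simp only [FuzzyGraph.closedRealNbrs, FuzzyGraph.realNbrs, mem_insert, mem_filter,
        mem_univ, true_and, mem_sdiff]
      constructor
      · rintro (rfl | hx)
        · exact ⟨hwC, fun hw' => hwH (hH'subH hw')⟩
        · refine ⟨hnc x hx, fun hx' => ?_⟩
          exact hnb x hx' (by rwa [G.real_symm] at hx)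
      · rintro ⟨hxC, hxH'⟩
        by_cases hxw : x = w
        · exact Or.inl hxw
        · right
          by_contra hnr
          rcases htouch w hwC x hxC (fun e => hxw e.symm) hnr with h' | h'
          · exact hwH h'
          · refine hxH' ?_
            rw [hH'def]
            refine mem_filter.2 ⟨h', w, hwC, hwH, ?_⟩
            intro hr
            exact hnr (by rwa [G.real_symm] at hr)
    rw [hKdef]
    exact mem_filter.2 ⟨mem_univ w, heq⟩
  -- final count
  have hfin : n ≤ 6 * d + k + 4 * d * k + (k + 2) := by
    have e0 := card_le_card hcover
    have e1 := card_union_le (H ∪ Cut ∪ Bad) K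
    have e2 := card_union_le (H ∪ Cut) Bad
    have e3 := card_union_le H Cut
    omega
  exact stmt6_arith3 k d n hk hd hbig' hfin
end

section
/- Let G = (V, E⁺, E⁰) be a fuzzy graph with weight function ω that is fuzzy c-closed, and let k be a nonnegative integer. Let K be a nonempty clique in G⁽⁺⁾ and let X := {v ∈ V : N⁺(v) = K}. Assume that X is a clique in G⁽⁰⁾ (every two distinct vertices of X are joined by a fuzzy edge) and |X| > 2k + c + 1, and let v ∈ X. Then G admits a clustering of cost at most k if and only if the fuzzy graph G − v obtained by deleting the vertex v (restricting E⁺, E⁰ and ω to pairs of remaining vertices) admits a clustering of cost at most k. -/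
open Finset

/-- The fuzzy graph obtained by deleting the vertex `v`. -/
def FuzzyGraph.deleteVertex {V : Type*} (G : FuzzyGraph V) (v : V) :
    FuzzyGraph {x : V // x ≠ v} where
  real a b := G.real a b
  fuzzy a b := G.fuzzy a b
  real_symm a b := G.real_symm a b
  fuzzy_symm a b := G.fuzzy_symm a b
  real_irrefl a := G.real_irrefl a
  fuzzy_irrefl a := G.fuzzy_irrefl a
  not_real_and_fuzzy a b := G.not_real_and_fuzzy a b

section Aux

open Finset

variable {α : Type*} [Fintype α] [DecidableEq α]

lemma together_refl (P : Finpartition (univ : Finset α)) (a : α) : together P a a := by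
  obtain ⟨t, ht, hat⟩ := P.exists_mem (mem_univ a)
  exact ⟨t, ht, hat, hat⟩

lemma together_symm {P : Finpartition (univ : Finset α)} {a b : α} (h : together P a b) :
    together P b a := by
  obtain ⟨t, ht, h1, h2⟩ := h
  exact ⟨t, ht, h2, h1⟩

lemma together_trans {P : Finpartition (univ : Finset α)} {a b c : α}
    (h1 : together P a b) (h2 : together P b c) : together P a c := by
  obtain ⟨t, ht, hat, hbt⟩ := h1
  obtain ⟨u, hu, hbu, hcu⟩ := h2
  rw [P.eq_of_mem_parts ht hu hbt hbu] at hat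
  exact ⟨u, hu, hat, hcu⟩

lemma together_ofSetoid (s : Setoid α) [DecidableRel s.r] (a b : α) :
    together (Finpartition.ofSetoid s) a b ↔ s.r a b := by
  constructor
  · rintro ⟨t, ht, hat, hbt⟩
    have hp := Finpartition.part_eq_of_mem (Finpartition.ofSetoid s) ht hat
    rw [← hp] at hbt
    exact Finpartition.mem_part_ofSetoid_iff_rel.1 hbt
  · intro h
    exact ⟨(Finpartition.ofSetoid s).part a, (Finpartition.part_mem _).2 (mem_univ a),
      Finpartition.mem_part _ (mem_univ a), Finpartition.mem_part_ofSetoid_iff_rel.2 h⟩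

lemma two_mul_card_le_sum_offDiag (g : α × α → ℕ) (B : Finset α) (u : α) (hu : u ∉ B)
    (h1 : ∀ b ∈ B, 1 ≤ g (b, u)) (h2 : ∀ b ∈ B, 1 ≤ g (u, b)) :
    2 * B.card ≤ ∑ p ∈ univ.offDiag, g p := by
  classical
  set T : Finset (α × α) := B.image (fun b => (b, u)) ∪ B.image (fun b => (u, b)) with hT
  have hbu : ∀ b ∈ B, b ≠ u := fun b hb h => hu (h ▸ hb)
  have hTsub : T ⊆ univ.offDiag := by
    intro p hp
    simp only [hT, mem_union, mem_image] at hp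
    rcases hp with ⟨b, hb, rfl⟩ | ⟨b, hb, rfl⟩ <;>
      exact Finset.mem_offDiag.2 ⟨mem_univ _, mem_univ _, by
        first
        | exact hbu b hb
        | exact fun h => hbu b hb h.symm⟩
  have hdisj : Disjoint (B.image (fun b => (b, u))) (B.image (fun b => (u, b))) := by
    rw [Finset.disjoint_left]
    rintro p hp1 hp2
    simp only [mem_image] at hp1 hp2
    obtain ⟨b, hb, rfl⟩ := hp1
    obtain ⟨b', hb', heq⟩ := hp2
    have : u = b := (Prod.ext_iff.1 heq).1
    exact hu (this ▸ hb)
  have hcard : T.card = 2 * B.card := by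
    rw [hT, card_union_of_disjoint hdisj,
      card_image_of_injective _ (fun a b h => (Prod.ext_iff.1 h).1),
      card_image_of_injective _ (fun a b h => (Prod.ext_iff.1 h).2)]
    ring
  calc 2 * B.card = ∑ _p ∈ T, 1 := by rw [sum_const, smul_eq_mul, mul_one, hcard]
    _ ≤ ∑ p ∈ T, g p := by
        refine sum_le_sum ?_
        intro p hp
        simp only [hT, mem_union, mem_image] at hp
        rcases hp with ⟨b, hb, rfl⟩ | ⟨b, hb, rfl⟩
        · exact h1 b hb
        · exact h2 b hb
    _ ≤ ∑ p ∈ univ.offDiag, g p := sum_le_sum_of_subset hTsub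

lemma sum_offDiag_subtype (v : α) (g : α × α → ℕ) :
    ∑ p ∈ (univ : Finset {x : α // x ≠ v}).offDiag, g (p.1.1, p.2.1) =
    ∑ p ∈ (univ : Finset α).offDiag.filter (fun p => p.1 ≠ v ∧ p.2 ≠ v), g p := by
  refine Finset.sum_bij (fun p _ => (p.1.1, p.2.1)) ?_ ?_ ?_ ?_
  · intro a ha
    have hne : a.1 ≠ a.2 := (Finset.mem_offDiag.1 ha).2.2
    refine mem_filter.2 ⟨Finset.mem_offDiag.2 ⟨mem_univ _, mem_univ _, ?_⟩, a.1.2, a.2.2⟩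
    intro h
    exact hne (Subtype.ext h)
  · intro a _ b _ h
    exact Prod.ext (Subtype.ext (Prod.ext_iff.1 h).1) (Subtype.ext (Prod.ext_iff.1 h).2)
  · intro b hb
    obtain ⟨hb1, hb2, hb3⟩ := mem_filter.1 hb
    have hne := (Finset.mem_offDiag.1 hb1).2.2
    refine ⟨(⟨b.1, hb2⟩, ⟨b.2, hb3⟩), ?_, rfl⟩
    exact Finset.mem_offDiag.2 ⟨mem_univ _, mem_univ _, fun h => hne (congrArg Subtype.val h)⟩
  · intro a _
    rfl

end Aux

section Transfer

variable {V : Type*} [Fintype V] [DecidableEq V]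

lemma nonedge_symm (G : FuzzyGraph V) {a b : V} (h : G.nonedge a b) : G.nonedge b a := by
  obtain ⟨h1, h2, h3⟩ := h
  exact ⟨h1.symm, by rwa [G.real_symm], by rwa [G.fuzzy_symm]⟩

lemma nonedge_delete_iff (G : FuzzyGraph V) (v : V) (a b : {x : V // x ≠ v}) :
    (G.deleteVertex v).nonedge a b ↔ G.nonedge a.1 b.1 := by
  constructor
  · rintro ⟨h1, h2, h3⟩
    exact ⟨fun h => h1 (Subtype.ext h), h2, h3⟩
  · rintro ⟨h1, h2, h3⟩
    exact ⟨fun h => h1 (congrArg Subtype.val h), h2, h3⟩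

lemma cost_deleteVertex (G : FuzzyGraph V) (ω : V → V → ℕ) (v : V)
    (P' : Finpartition (univ : Finset {x : V // x ≠ v}))
    (P : Finpartition (univ : Finset V))
    (hcomp : ∀ a b : {x : V // x ≠ v}, together P' a b ↔ together P a.1 b.1) :
    cost (G.deleteVertex v) (fun a b => ω a.1 b.1) P' =
      (∑ p ∈ ((univ : Finset V).offDiag.filter fun p => p.1 ≠ v ∧ p.2 ≠ v),
        ((if G.real p.1 p.2 ∧ ¬together P p.1 p.2 then ω p.1 p.2 else 0) +
         (if G.nonedge p.1 p.2 ∧ together P p.1 p.2 then ω p.1 p.2 else 0))) / 2 := by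
  unfold cost
  congr 1
  rw [← sum_offDiag_subtype v (fun p => (if G.real p.1 p.2 ∧ ¬together P p.1 p.2
      then ω p.1 p.2 else 0) +
      (if G.nonedge p.1 p.2 ∧ together P p.1 p.2 then ω p.1 p.2 else 0))]
  refine sum_congr rfl fun p _ => ?_
  have e1 : ((G.deleteVertex v).real p.1 p.2 ∧ ¬together P' p.1 p.2) ↔
      (G.real p.1.1 p.2.1 ∧ ¬together P p.1.1 p.2.1) :=
    and_congr Iff.rfl (not_congr (hcomp _ _))
  have e2 : ((G.deleteVertex v).nonedge p.1 p.2 ∧ together P' p.1 p.2) ↔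
      (G.nonedge p.1.1 p.2.1 ∧ together P p.1.1 p.2.1) :=
    and_congr (nonedge_delete_iff G v _ _) (hcomp _ _)
  rw [if_congr e1 rfl rfl, if_congr e2 rfl rfl]

end Transfer

/-- If `K` is a nonempty real clique, `X = {v : N⁺(v) = K}` is a fuzzy clique
with `|X| > 2k + c + 1` and `v ∈ X`, then `G` has a clustering of cost at most `k` iff
`G − v` has one. -/
theorem stmt14 {V : Type*} [Fintype V] [DecidableEq V]
    (G : FuzzyGraph V) (ω : V → V → ℕ) (hω : IsWeight G ω) (c k : ℕ)
    (hcl : FuzzyCClosed G c)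
    (K : Finset V) (hKne : K.Nonempty) (hK : IsRealClique G K)
    (hXfuzzy : IsFuzzyClique G (Finset.univ.filter fun x => G.realNbrs x = K))
    (hXcard : 2 * k + c + 1 < (Finset.univ.filter fun x => G.realNbrs x = K).card)
    (v : V) (hv : G.realNbrs v = K) :
    (∃ 𝒞 : Finpartition (Finset.univ : Finset V), cost G ω 𝒞 ≤ k) ↔
    (∃ 𝒞' : Finpartition (Finset.univ : Finset {x : V // x ≠ v}),
      cost (G.deleteVertex v) (fun a b => ω a.1 b.1) 𝒞' ≤ k) := by
  classical
  set X : Finset V := Finset.univ.filter (fun x => G.realNbrs x = K) with hXdef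
  have hvX : v ∈ X := by simp [hXdef, hv]
  have hreal_iff : ∀ x ∈ X, ∀ u : V, G.real x u ↔ u ∈ K := by
    intro x hx u
    have hxK : G.realNbrs x = K := (mem_filter.1 hx).2
    rw [← hxK]
    simp [FuzzyGraph.realNbrs]
  have hXnotK : ∀ x ∈ X, x ∉ K := by
    intro x hx hxK
    have := (hreal_iff x hx x).2 hxK
    simp [G.real_irrefl] at this
  have hvK : v ∉ K := hXnotK v hvX
  have homega : ∀ a b : V, a ≠ b → ¬ G.fuzzy a b → 1 ≤ ω a b := by
    intro a b hne hf
    rcases Nat.eq_zero_or_pos (ω a b) with h | h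
    · exact absurd ((hω.2 a b hne).1 h) hf
    · exact h
  constructor
  · rintro ⟨𝒞, h𝒞⟩
    let s' : Setoid {x : V // x ≠ v} :=
      ⟨fun a b => together 𝒞 a.1 b.1,
        ⟨fun a => together_refl 𝒞 a.1, fun h => together_symm h,
          fun h1 h2 => together_trans h1 h2⟩⟩
    haveI : DecidableRel s'.r := fun a b => inferInstanceAs (Decidable (together 𝒞 a.1 b.1))
    refine ⟨Finpartition.ofSetoid s', ?_⟩
    rw [cost_deleteVertex G ω v _ 𝒞 (fun a b => together_ofSetoid s' a b)]
    refine le_trans (Nat.div_le_div_right (sum_le_sum_of_subset (filter_subset _ _))) h𝒞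
  · rintro ⟨𝒞', h𝒞'⟩
    set g : {x : V // x ≠ v} × {x : V // x ≠ v} → ℕ := fun p =>
      (if (G.deleteVertex v).real p.1 p.2 ∧ ¬together 𝒞' p.1 p.2 then ω p.1.1 p.2.1 else 0) +
      (if (G.deleteVertex v).nonedge p.1 p.2 ∧ together 𝒞' p.1 p.2 then ω p.1.1 p.2.1 else 0)
      with hg
    have hSg : (∑ p ∈ (univ : Finset {x : V // x ≠ v}).offDiag, g p) / 2 ≤ k := h𝒞'
    set Xs : Finset {x : V // x ≠ v} := X.subtype (fun x => x ≠ v) with hXs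
    have hXsX : ∀ x : {x : V // x ≠ v}, x ∈ Xs ↔ x.1 ∈ X := by
      intro x; simp [hXs, Finset.mem_subtype]
    have hXscard : 2 * k + c + 1 ≤ Xs.card := by
      have h1 : Xs.card = (X.filter (fun x => x ≠ v)).card := Finset.card_subtype _ _
      rw [Finset.filter_ne' X v, Finset.card_erase_of_mem hvX] at h1
      omega
    -- For every u in K (as a subtype element), few elements of Xs are apart from u
    have hA : ∀ u : {x : V // x ≠ v}, u.1 ∈ K →
        (Xs \ Xs.filter (fun x => together 𝒞' x u)).card ≤ k := by
      intro u hu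
      have huX : u.1 ∉ X := fun h => hXnotK u.1 h hu
      set B := Xs \ Xs.filter (fun x => together 𝒞' x u) with hB
      have hmemB : ∀ b ∈ B, b ∈ Xs ∧ ¬ together 𝒞' b u := by
        intro b hb
        obtain ⟨hb1, hb2⟩ := Finset.mem_sdiff.1 hb
        exact ⟨hb1, fun ht => hb2 (Finset.mem_filter.2 ⟨hb1, ht⟩)⟩
      have huB : u ∉ B := fun h => huX ((hXsX u).1 (hmemB u h).1)
      have hbd := two_mul_card_le_sum_offDiag g B u huB ?_ ?_
      · omega
      · intro b hb
        obtain ⟨hbXs, hbt⟩ := hmemB b hb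
        have hbX : b.1 ∈ X := (hXsX b).1 hbXs
        have hbne : b.1 ≠ u.1 := fun h => huX (h ▸ hbX)
        have hreal : G.real b.1 u.1 := (hreal_iff b.1 hbX u.1).2 hu
        have hnf : ¬ G.fuzzy b.1 u.1 := fun h => G.not_real_and_fuzzy b.1 u.1 ⟨hreal, h⟩
        have hcond : (G.deleteVertex v).real b u ∧ ¬together 𝒞' b u := ⟨hreal, hbt⟩
        calc 1 ≤ ω b.1 u.1 := homega b.1 u.1 hbne hnf
          _ ≤ g (b, u) := by
              rw [hg]; simp only []; rw [if_pos hcond]; exact Nat.le_add_right _ _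
      · intro b hb
        obtain ⟨hbXs, hbt⟩ := hmemB b hb
        have hbX : b.1 ∈ X := (hXsX b).1 hbXs
        have hbne : b.1 ≠ u.1 := fun h => huX (h ▸ hbX)
        have hreal : G.real b.1 u.1 := (hreal_iff b.1 hbX u.1).2 hu
        have hreal' : G.real u.1 b.1 := by rwa [G.real_symm]
        have hnf : ¬ G.fuzzy b.1 u.1 := fun h => G.not_real_and_fuzzy b.1 u.1 ⟨hreal, h⟩
        have hnf' : ¬ G.fuzzy u.1 b.1 := by rwa [G.fuzzy_symm]
        have hbt' : ¬ together 𝒞' u b := fun h => hbt (together_symm h)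
        have hcond : (G.deleteVertex v).real u b ∧ ¬together 𝒞' u b := ⟨hreal', hbt'⟩
        calc 1 ≤ ω u.1 b.1 := homega u.1 b.1 (Ne.symm hbne) hnf'
          _ ≤ g (u, b) := by
              rw [hg]; simp only []; rw [if_pos hcond]; exact Nat.le_add_right _ _
    have hAcard : ∀ u : {x : V // x ≠ v}, u.1 ∈ K →
        Xs.card - k ≤ (Xs.filter (fun x => together 𝒞' x u)).card := by
      intro u hu
      have h1 := hA u hu
      have h2 : (Xs \ Xs.filter (fun x => together 𝒞' x u)).card =
          Xs.card - (Xs.filter (fun x => together 𝒞' x u)).card :=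
        Finset.card_sdiff_of_subset (Finset.filter_subset _ _)
      have h3 : (Xs.filter (fun x => together 𝒞' x u)).card ≤ Xs.card :=
        Finset.card_le_card (Finset.filter_subset _ _)
      omega
    obtain ⟨u₀, hu₀⟩ := hKne
    have hu₀v : u₀ ≠ v := fun h => hvK (h ▸ hu₀)
    set u₀s : {x : V // x ≠ v} := ⟨u₀, hu₀v⟩ with hu₀s
    have hu₀sK : u₀s.1 ∈ K := hu₀
    have hA₀ := hAcard u₀s hu₀sK
    obtain ⟨x₀, hx₀⟩ : (Xs.filter (fun x => together 𝒞' x u₀s)).Nonempty := by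
      rw [← Finset.card_pos]
      omega
    have hx₀Xs : x₀ ∈ Xs := (Finset.mem_filter.1 hx₀).1
    have hx₀X : x₀.1 ∈ X := (hXsX x₀).1 hx₀Xs
    have hx₀t : together 𝒞' x₀ u₀s := (Finset.mem_filter.1 hx₀).2
    -- all of K is together with x₀
    have hKtog : ∀ u : {x : V // x ≠ v}, u.1 ∈ K → together 𝒞' x₀ u := by
      intro u hu
      set Au := Xs.filter (fun x => together 𝒞' x u) with hAu
      set A₀ := Xs.filter (fun x => together 𝒞' x u₀s) with hA₀'
      have hsub2 : Xs ⊆ (Au ∩ A₀) ∪ ((Xs \ Au) ∪ (Xs \ A₀)) := by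
        intro x hx
        by_cases h1 : together 𝒞' x u
        · by_cases h2 : together 𝒞' x u₀s
          · exact Finset.mem_union_left _ (Finset.mem_inter.2
              ⟨Finset.mem_filter.2 ⟨hx, h1⟩, Finset.mem_filter.2 ⟨hx, h2⟩⟩)
          · exact Finset.mem_union_right _ (Finset.mem_union_right _
              (Finset.mem_sdiff.2 ⟨hx, fun hm => h2 (Finset.mem_filter.1 hm).2⟩))
        · exact Finset.mem_union_right _ (Finset.mem_union_left _
            (Finset.mem_sdiff.2 ⟨hx, fun hm => h1 (Finset.mem_filter.1 hm).2⟩))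
      have hcard2 : Xs.card ≤ (Au ∩ A₀).card + ((Xs \ Au).card + (Xs \ A₀).card) := by
        calc Xs.card ≤ ((Au ∩ A₀) ∪ ((Xs \ Au) ∪ (Xs \ A₀))).card :=
              Finset.card_le_card hsub2
          _ ≤ (Au ∩ A₀).card + ((Xs \ Au) ∪ (Xs \ A₀)).card := Finset.card_union_le _ _
          _ ≤ _ := by
              exact Nat.add_le_add_left (Finset.card_union_le _ _) _
      have hk1 := hA u hu
      have hk2 := hA u₀s hu₀sK
      rw [← hAu] at hk1
      rw [← hA₀'] at hk2
      have hpos : 0 < (Au ∩ A₀).card := by omega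
      obtain ⟨y, hy⟩ := Finset.card_pos.1 hpos
      have hyu : together 𝒞' y u := (Finset.mem_filter.1 (Finset.mem_inter.1 hy).1).2
      have hyu₀ : together 𝒞' y u₀s := (Finset.mem_filter.1 (Finset.mem_inter.1 hy).2).2
      exact together_trans hx₀t (together_trans (together_symm hyu₀) hyu)
    -- no nonneighbor of v is together with x₀
    have hnontog : ∀ u : {x : V // x ≠ v}, G.nonedge v u.1 → ¬ together 𝒞' x₀ u := by
      intro u hne htog
      obtain ⟨hvu, hnr, hnf⟩ := hne
      have huK : u.1 ∉ K := fun h => hnr ((hreal_iff v hvX u.1).2 h)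
      have huX : u.1 ∉ X := fun h => hnf (hXfuzzy v hvX u.1 h hvu)
      have hclosed := hcl v u.1 hvu hnf
      set A₀ := Xs.filter (fun x => together 𝒞' x u₀s) with hA₀'
      set Fz := A₀.filter (fun x => G.fuzzy u.1 x.1) with hFz
      have hfsub : Fz.card ≤ ((G.fuzzyNbrs v) ∩ (G.fuzzyNbrs u.1)).card := by
        apply Finset.card_le_card_of_injOn (fun x => x.1)
        · intro x hx
          obtain ⟨hx1, hx2⟩ := Finset.mem_filter.1 hx
          have hxXs : x ∈ Xs := Finset.filter_subset _ _ hx1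
          have hxX : x.1 ∈ X := (hXsX x).1 hxXs
          have hfvx : G.fuzzy v x.1 := hXfuzzy v hvX x.1 hxX (Ne.symm x.2)
          simp only [Finset.mem_inter, FuzzyGraph.fuzzyNbrs, Finset.mem_filter, Finset.mem_univ,
            true_and]
          exact (Finset.mem_inter.2 ⟨Finset.mem_filter.2 ⟨Finset.mem_univ _, hfvx⟩,
            Finset.mem_filter.2 ⟨Finset.mem_univ _, hx2⟩⟩ : x.1 ∈ (G.fuzzyNbrs v) ∩ (G.fuzzyNbrs u.1))
        · intro a _ b _ h
          exact Subtype.ext h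
      set B := A₀ \ Fz with hB
      have hmemB : ∀ b ∈ B, b ∈ A₀ ∧ ¬ G.fuzzy u.1 b.1 := by
        intro b hb
        obtain ⟨hb1, hb2⟩ := Finset.mem_sdiff.1 hb
        exact ⟨hb1, fun hf => hb2 (Finset.mem_filter.2 ⟨hb1, hf⟩)⟩
      have hBcard : k + 1 ≤ B.card := by
        have h1 : B.card = A₀.card - Fz.card := Finset.card_sdiff_of_subset (Finset.filter_subset _ _)
        have h2 : Fz.card ≤ A₀.card := Finset.card_le_card (Finset.filter_subset _ _)
        have h3 := hAcard u₀s hu₀sK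
        omega
      have huB : u ∉ B := by
        intro h
        exact huX ((hXsX u).1 (Finset.filter_subset _ _ (hmemB u h).1))
      have htoguu₀ : together 𝒞' u u₀s := together_trans (together_symm htog) hx₀t
      have hbd := two_mul_card_le_sum_offDiag g B u huB ?_ ?_
      · omega
      · intro b hb
        obtain ⟨hb1, hb2⟩ := hmemB b hb
        obtain ⟨hbXs, hbt⟩ := Finset.mem_filter.1 hb1
        have hbX : b.1 ∈ X := (hXsX b).1 hbXs
        have hbne : b.1 ≠ u.1 := fun h => huX (h ▸ hbX)
        have hnrbu : ¬ G.real b.1 u.1 := fun h => huK ((hreal_iff b.1 hbX u.1).1 h)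
        have hnfbu : ¬ G.fuzzy b.1 u.1 := fun h => hb2 (by rwa [G.fuzzy_symm] at h)
        have hnon : (G.deleteVertex v).nonedge b u :=
          ⟨fun h => hbne (congrArg Subtype.val h), hnrbu, hnfbu⟩
        have htogbu : together 𝒞' b u := together_trans hbt (together_symm htoguu₀)
        have hcond : (G.deleteVertex v).nonedge b u ∧ together 𝒞' b u := ⟨hnon, htogbu⟩
        calc 1 ≤ ω b.1 u.1 := homega b.1 u.1 hbne hnfbu
          _ ≤ g (b, u) := by
              rw [hg]; simp only []; rw [if_pos hcond]; exact Nat.le_add_left _ _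
      · intro b hb
        obtain ⟨hb1, hb2⟩ := hmemB b hb
        obtain ⟨hbXs, hbt⟩ := Finset.mem_filter.1 hb1
        have hbX : b.1 ∈ X := (hXsX b).1 hbXs
        have hbne : b.1 ≠ u.1 := fun h => huX (h ▸ hbX)
        have hnrbu : ¬ G.real b.1 u.1 := fun h => huK ((hreal_iff b.1 hbX u.1).1 h)
        have hnrub : ¬ G.real u.1 b.1 := fun h => hnrbu (by rwa [G.real_symm] at h)
        have hnon : (G.deleteVertex v).nonedge u b :=
          ⟨fun h => hbne (congrArg Subtype.val h).symm, hnrub, hb2⟩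
        have htogub : together 𝒞' u b :=
          together_symm (together_trans hbt (together_symm htoguu₀))
        have hcond : (G.deleteVertex v).nonedge u b ∧ together 𝒞' u b := ⟨hnon, htogub⟩
        calc 1 ≤ ω u.1 b.1 := homega u.1 b.1 (Ne.symm hbne) hb2
          _ ≤ g (u, b) := by
              rw [hg]; simp only []; rw [if_pos hcond]; exact Nat.le_add_left _ _
    -- build the extended clustering
    set ρ : V → {x : V // x ≠ v} := fun w => if h : w = v then x₀ else ⟨w, h⟩ with hρdef
    have hρ : ∀ (w : V) (h : w ≠ v), ρ w = ⟨w, h⟩ := fun w h => dif_neg h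
    have hρv : ρ v = x₀ := dif_pos rfl
    let s : Setoid V :=
      ⟨fun a b => together 𝒞' (ρ a) (ρ b),
        ⟨fun a => together_refl 𝒞' (ρ a), fun h => together_symm h,
          fun h1 h2 => together_trans h1 h2⟩⟩
    haveI : DecidableRel s.r := fun a b => inferInstanceAs (Decidable (together 𝒞' (ρ a) (ρ b)))
    have htog_iff : ∀ a b : V, together (Finpartition.ofSetoid s) a b ↔
        together 𝒞' (ρ a) (ρ b) := fun a b => together_ofSetoid s a b
    refine ⟨Finpartition.ofSetoid s, ?_⟩
    have hcomp : ∀ a b : {x : V // x ≠ v}, together 𝒞' a b ↔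
        together (Finpartition.ofSetoid s) a.1 b.1 := by
      intro a b
      rw [htog_iff, hρ a.1 a.2, hρ b.1 b.2]
    show cost G ω (Finpartition.ofSetoid s) ≤ k
    unfold cost
    rw [← Finset.sum_filter_add_sum_filter_not (univ : Finset V).offDiag
      (fun p => p.1 ≠ v ∧ p.2 ≠ v)]
    have key : ∀ u : V, (hu : u ≠ v) →
        (G.real v u → together (Finpartition.ofSetoid s) v u) ∧
        (G.nonedge v u → ¬ together (Finpartition.ofSetoid s) v u) := by
      intro u hu
      have hiff : together (Finpartition.ofSetoid s) v u ↔ together 𝒞' x₀ ⟨u, hu⟩ := by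
        rw [htog_iff, hρv, hρ u hu]
      constructor
      · intro hr
        have huK : u ∈ K := (hreal_iff v hvX u).1 hr
        exact hiff.2 (hKtog ⟨u, hu⟩ huK)
      · intro hne ht
        exact hnontog ⟨u, hu⟩ hne (hiff.1 ht)
    have hrest : ∑ p ∈ (univ : Finset V).offDiag.filter (fun p => ¬(p.1 ≠ v ∧ p.2 ≠ v)),
        ((if G.real p.1 p.2 ∧ ¬together (Finpartition.ofSetoid s) p.1 p.2 then ω p.1 p.2 else 0) +
         (if G.nonedge p.1 p.2 ∧ together (Finpartition.ofSetoid s) p.1 p.2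
          then ω p.1 p.2 else 0)) = 0 := by
      refine Finset.sum_eq_zero ?_
      intro p hp
      obtain ⟨hp1, hp2⟩ := Finset.mem_filter.1 hp
      have hpne : p.1 ≠ p.2 := (Finset.mem_offDiag.1 hp1).2.2
      push_neg at hp2
      rcases Classical.em (p.1 = v) with h1 | h1
      · have h2 : p.2 ≠ v := fun h => hpne (h1.trans h.symm)
        obtain ⟨kr, kn⟩ := key p.2 h2
        have c1 : ¬(G.real p.1 p.2 ∧ ¬together (Finpartition.ofSetoid s) p.1 p.2) := by
          rintro ⟨hr, hnt⟩
          rw [h1] at hr hnt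
          exact hnt (kr hr)
        have c2 : ¬(G.nonedge p.1 p.2 ∧ together (Finpartition.ofSetoid s) p.1 p.2) := by
          rintro ⟨hne, ht⟩
          rw [h1] at hne ht
          exact kn hne ht
        rw [if_neg c1, if_neg c2]
        rfl
      · have h2 : p.2 = v := hp2 h1
        obtain ⟨kr, kn⟩ := key p.1 h1
        have c1 : ¬(G.real p.1 p.2 ∧ ¬together (Finpartition.ofSetoid s) p.1 p.2) := by
          rintro ⟨hr, hnt⟩
          rw [h2] at hr hnt
          refine hnt (together_symm (kr ?_))
          rwa [G.real_symm] at hr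
        have c2 : ¬(G.nonedge p.1 p.2 ∧ together (Finpartition.ofSetoid s) p.1 p.2) := by
          rintro ⟨hne, ht⟩
          rw [h2] at hne ht
          exact kn (nonedge_symm G hne) (together_symm ht)
        rw [if_neg c1, if_neg c2]
        rfl
    rw [hrest, add_zero, ← cost_deleteVertex G ω v 𝒞' (Finpartition.ofSetoid s) hcomp]
    exact h𝒞'
end
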